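/- For n ≥ 3, the τ-graph of the Lucas cube Λ_n is the cycle C_n on n vertices: the Θ-class X_i (edges flipping coordinate i) is adjacent in the τ-graph precisely to X_{i-1} and X_{i+1} (indices modulo n). -/

import Mathlib

open SimpleGraph Function

/-- The hypercube graph `Q_n` on binary strings of length `n`. -/
def cubeGraph (n : ℕ) : SimpleGraph (Fin n → Bool) where
  Adj u v := hammingDist u v = 1
  symm := ⟨fun u v h => by simpa [hammingDist_comm] using h⟩
  loopless := ⟨fun u h => by simp [hammingDist_self] at h⟩

/-- The downward closure of a set of binary strings under the coordinatewise order. -/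
def dClosure {n : ℕ} (X : Set (Fin n → Bool)) : Set (Fin n → Bool) :=
  {u | ∃ x ∈ X, u ≤ x}

/-- The daisy cube `Q_n(X)`: the subgraph of `Q_n` induced by the downward closure of `X`. -/
def daisyCube (n : ℕ) (X : Set (Fin n → Bool)) : SimpleGraph (dClosure X) :=
  (cubeGraph n).induce (dClosure X)

/-- The τ-graph of a (coordinatized) partial cube `G ⊆ Q_n`, with Θ-classes identified with the
coordinates: two classes are adjacent iff incident edges, one flipping each coordinate, form a
convex path on three vertices. -/
def coordTau {n : ℕ} {V : Type*} (val : V → (Fin n → Bool)) (G : SimpleGraph V) :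
    SimpleGraph (Fin n) where
  Adj i j := i ≠ j ∧ ∃ u v w : V, G.Adj u v ∧ G.Adj v w ∧
      val u i ≠ val v i ∧ val v j ≠ val w j ∧
      ¬ G.Adj u w ∧ ∀ x : V, G.Adj u x → G.Adj w x → x = v
  symm := by
    constructor
    rintro i j ⟨hij, u, v, w, h1, h2, h3, h4, h5, h6⟩
    exact ⟨hij.symm, w, v, u, h2.symm, h1.symm, fun h => h4 h.symm, fun h => h3 h.symm,
      fun h => h5 h.symm, fun x hw hu => h6 x hu hw⟩
  loopless := by
    constructor
    rintro i ⟨hij, _⟩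
    exact hij rfl

/-- Binary strings of length `n` with no two cyclically consecutive 1's. -/
def lucasSet (n : ℕ) : Set (Fin n → Bool) :=
  {u | ∀ i j : Fin n, ((i : ℕ) + 1) % n = (j : ℕ) → ¬(u i = true ∧ u j = true)}

/-- The Lucas cube `Λ_n`. -/
def lucasCube (n : ℕ) : SimpleGraph (lucasSet n) :=
  (cubeGraph n).induce (lucasSet n)

lemma hd_one_iff {n : ℕ} (u v : Fin n → Bool) :
    hammingDist u v = 1 ↔ ∃ k, u k ≠ v k ∧ ∀ l, u l ≠ v l → l = k := by
  rw [hammingDist, Finset.card_eq_one]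
  constructor
  · rintro ⟨k, hk⟩
    have hmem : ∀ l : Fin n, u l ≠ v l ↔ l = k := by
      intro l
      rw [← Finset.mem_singleton, ← hk, Finset.mem_filter]
      simp
    exact ⟨k, (hmem k).mpr rfl, fun l hl => (hmem l).mp hl⟩
  · rintro ⟨k, h1, h2⟩
    refine ⟨k, ?_⟩
    ext l
    simp only [Finset.mem_filter, Finset.mem_univ, true_and, Finset.mem_singleton]
    exact ⟨h2 l, fun h => h ▸ h1⟩

lemma succ_mod_ne {n : ℕ} (hn : 2 ≤ n) (a : ℕ) (ha : a < n) : (a + 1) % n ≠ a := by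
  intro h
  rcases Nat.lt_or_ge (a + 1) n with h1 | h1
  · rw [Nat.mod_eq_of_lt h1] at h; omega
  · have h2 : a + 1 = n := by omega
    rw [h2, Nat.mod_self] at h
    omega

lemma fin_succ_ne {n : ℕ} (hn : 2 ≤ n) {a b : Fin n} (hab : ((a : ℕ) + 1) % n = (b : ℕ)) :
    a ≠ b := by
  intro h
  subst h
  exact succ_mod_ne hn a a.isLt hab

lemma lucas_adj_iff {n : ℕ} (x y : lucasSet n) :
    (lucasCube n).Adj x y ↔ hammingDist (x : Fin n → Bool) (y : Fin n → Bool) = 1 :=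
  Iff.rfl

/-- Backward helper: consecutive classes are adjacent in the tau graph. -/
lemma tau_adj_of_succ {n : ℕ} (hn : 3 ≤ n) (i j : Fin n)
    (hij : ((i : ℕ) + 1) % n = (j : ℕ)) :
    (coordTau (Subtype.val) (lucasCube n)).Adj i j := by
  have hn2 : 2 ≤ n := by omega
  have hine : i ≠ j := fin_succ_ne hn2 hij
  -- the indicator vectors
  set e : Fin n → (Fin n → Bool) := fun k => Function.update (fun _ => false) k true with he
  have he_app : ∀ k l : Fin n, e k l = true ↔ l = k := by
    intro k l
    simp [he, Function.update_apply]
  have hzero : (fun _ : Fin n => false) ∈ lucasSet n := by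
    intro a b hab hcon
    exact Bool.false_ne_true hcon.1
  have hemem : ∀ k : Fin n, e k ∈ lucasSet n := by
    intro k a b hab hcon
    have ha : a = k := (he_app k a).mp hcon.1
    have hb : b = k := (he_app k b).mp hcon.2
    exact fin_succ_ne hn2 hab (ha.trans hb.symm)
  have hadj : ∀ k : Fin n, hammingDist (e k) (fun _ : Fin n => false) = 1 := by
    intro k
    rw [hd_one_iff]
    refine ⟨k, ?_, ?_⟩
    · simp [(he_app k k).mpr rfl]
    · intro l hl
      by_contra h
      apply hl
      have : e k l = false := by
        cases h' : e k l
        · rfl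
        · exact absurd ((he_app k l).mp h') h
      simp [this]
  refine ⟨hine, ⟨e i, hemem i⟩, ⟨fun _ => false, hzero⟩, ⟨e j, hemem j⟩, ?_, ?_, ?_, ?_, ?_, ?_⟩
  · exact hadj i
  · exact ((lucas_adj_iff _ _).mpr (by rw [hammingDist_comm]; exact hadj j))
  · show e i i ≠ false
    simp [(he_app i i).mpr rfl]
  · show (false : Bool) ≠ e j j
    simp [(he_app j j).mpr rfl]
  · -- not adjacent: e i and e j differ at two coords
    rw [lucas_adj_iff, hd_one_iff]
    rintro ⟨k, hk, hku⟩
    have h1 : e i i ≠ e j i := by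
      have : e j i = false := by
        cases h' : e j i
        · rfl
        · exact absurd ((he_app j i).mp h') hine
      simp [this, (he_app i i).mpr rfl]
    have h2 : e i j ≠ e j j := by
      have : e i j = false := by
        cases h' : e i j
        · rfl
        · exact absurd ((he_app i j).mp h') (Ne.symm hine)
      simp [this, (he_app j j).mpr rfl]
    exact hine ((hku i h1).trans (hku j h2).symm)
  · -- uniqueness of common neighbor
    rintro ⟨x, hx⟩ h1 h2
    rw [lucas_adj_iff] at h1 h2
    rw [hd_one_iff] at h1 h2
    obtain ⟨k, hk, hku⟩ := h1
    obtain ⟨l, hl, hlu⟩ := h2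
    have hki : k = i := by
      by_contra hki
      -- then x i = e i i = true
      have hxi : x i = true := by
        by_contra h
        exact hki ((hku i (fun h' => h (h'.symm.trans ((he_app i i).mpr rfl)))).symm)
      rcases eq_or_ne j l with rfl | hlj
      · -- x agrees with e j away from j, so x i = e j i = false
        have hxi' : x i = false := by
          by_contra h
          have hxi2 : e j i ≠ x i := by
            have hji : e j i = false := by
              cases h' : e j i
              · rfl
              · exact absurd ((he_app j i).mp h') hine
            rw [hji]
            intro hh
            exact h hh.symm
          exact hine (hlu i hxi2)
        rw [hxi] at hxi'
        exact (Bool.true_eq_false.mp hxi').elim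
      · -- x j = e j j = true, both x i and x j true, contradiction with lucasSet
        have hxj : x j = true := by
          by_contra h
          exact hlj (hlu j (fun h' => h (h'.symm.trans ((he_app j j).mpr rfl))))
        exact hx i j hij ⟨hxi, hxj⟩
    rw [hki] at hk hku
    -- x differs from e i only at i, and x i = false
    apply Subtype.ext
    funext m
    show x m = false
    rcases eq_or_ne m i with rfl | hmk
    · cases h' : x m
      · rfl
      · exact absurd (((he_app m m).mpr rfl).trans h'.symm) hk
    · have hem : e i m = x m := by
        by_contra h
        exact hmk (hku m h)
      rw [← hem]
      cases h' : e i m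
      · rfl
      · exact absurd ((he_app i m).mp h') hmk

/-- For `n ≥ 3`, the τ-graph of the Lucas cube `Λ_n` is the cycle `C_n`:
the Θ-class `X_i` of edges flipping coordinate `i` is adjacent in the τ-graph precisely to
`X_{i-1}` and `X_{i+1}` (indices modulo `n`). -/
theorem lucasCube_tau_eq_cycle (n : ℕ) (hn : 3 ≤ n) (i j : Fin n) :
    (coordTau (Subtype.val) (lucasCube n)).Adj i j ↔
      (((i : ℕ) + 1) % n = (j : ℕ) ∨ ((j : ℕ) + 1) % n = (i : ℕ)) := by
  have hn2 : 2 ≤ n := by omega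
  constructor
  · rintro ⟨hij, ⟨u, hu⟩, ⟨v, hv⟩, ⟨w, hw⟩, huv, hvw, hui, hvj, hnuw, huniq⟩
    rw [lucas_adj_iff, hd_one_iff] at huv hvw
    obtain ⟨k, hk, hku⟩ := huv
    obtain ⟨l, hl, hlu⟩ := hvw
    obtain rfl := hku i hui
    obtain rfl := hlu j hvj
    -- u, v agree away from i ; v, w agree away from j
    have huv' : ∀ m, m ≠ i → u m = v m := by
      intro m hm; by_contra h; exact hm (hku m h)
    have hvw' : ∀ m, m ≠ j → v m = w m := by
      intro m hm; by_contra h; exact hm (hlu m h)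
    -- the other common neighbor
    set v' : Fin n → Bool := Function.update u j (w j) with hv'
    have hv'j : v' j = w j := by simp [hv']
    have hv'u : ∀ m, m ≠ j → v' m = u m := by
      intro m hm; simp [hv', Function.update_apply, hm]
    have hv'w : ∀ m, m ≠ i → v' m = w m := by
      intro m hm
      rcases eq_or_ne m j with rfl | hmj
      · exact hv'j
      · rw [hv'u m hmj, huv' m hm, hvw' m hmj]
    have hv'ne : v' j ≠ v j := by
      rw [hv'j]; exact fun h => hvj h.symm
    have hv'not : v' ∉ lucasSet n := by
      intro hmem
      have h1 : hammingDist u v' = 1 := by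
        rw [hd_one_iff]
        refine ⟨j, ?_, ?_⟩
        · rw [hv'j, huv' j (Ne.symm hij)]
          exact hvj
        · intro m hm; by_contra h; exact hm ((hv'u m h).symm ▸ rfl)
      have h2 : hammingDist w v' = 1 := by
        rw [hd_one_iff]
        refine ⟨i, ?_, ?_⟩
        · rw [hv'u i hij, ← hvw' i hij]
          intro h
          exact hk h.symm
        · intro m hm; by_contra h; exact hm ((hv'w m h).symm ▸ rfl)
      have := huniq ⟨v', hmem⟩ ((lucas_adj_iff _ _).mpr h1) ((lucas_adj_iff _ _).mpr h2)
      have hvv : v' = v := congrArg Subtype.val this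
      exact hv'ne (by rw [hvv])
    -- extract a violating cyclically-consecutive pair
    simp only [lucasSet, Set.mem_setOf_eq] at hv'not
    push_neg at hv'not
    obtain ⟨a, b, hab, hca, hcb⟩ := hv'not
    -- the pair must involve j (else u violates)
    have hj : a = j ∨ b = j := by
      by_contra h
      push_neg at h
      exact hu a b hab ⟨by rw [← hv'u a h.1]; exact hca, by rw [← hv'u b h.2]; exact hcb⟩
    -- the pair must involve i (else w violates)
    have hi : a = i ∨ b = i := by
      by_contra h
      push_neg at h
      exact hw a b hab ⟨by rw [← hv'w a h.1]; exact hca, by rw [← hv'w b h.2]; exact hcb⟩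
    rcases hj with rfl | rfl <;> rcases hi with h' | h'
    · exact absurd h'.symm hij
    · subst h'; right; exact hab
    · subst h'; left; exact hab
    · exact absurd h'.symm hij
  · rintro (h | h)
    · exact tau_adj_of_succ hn i j h
    · exact (tau_adj_of_succ hn j i h).symm
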